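/- Let G be a bipartite graph with girth g and let W be a closed walk with cycle of length i ≤ 2g−2 in G. Then there is an edge e of G that is traversed at two consecutive positions of W (cyclically); that is, W can be written as W' e e W'', or e e W', or W' e e, or e W' e for suitable subwalks W', W''. -/

import Mathlib

open SimpleGraph

def cycleFree {V : Type*} {G : SimpleGraph V} {u v : V} (w : G.Walk u v) : Prop :=
  (SimpleGraph.fromEdgeSet {e | e ∈ w.edges}).IsAcyclic

def isCWWC {V : Type*} {G : SimpleGraph V} {u : V} (w : G.Walk u u) : Prop :=
  ¬ w.IsCycle ∧ ¬ cycleFree w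

private lemma myIsCycle_aux {V : Type*} {G : SimpleGraph V} {x y : V} (h : G.Adj y x)
    (r : G.Walk x y) (hnd : r.support.Nodup)
    (hch : (SimpleGraph.Walk.cons h r).edges.Chain' (· ≠ ·)) :
    (SimpleGraph.Walk.cons h r).IsCycle := by
  rw [SimpleGraph.Walk.cons_isCycle_iff]
  refine ⟨SimpleGraph.Walk.IsPath.mk' hnd, fun he => ?_⟩
  cases r with
  | nil => exact G.loopless.irrefl _ h
  | cons h' r' =>
    rw [SimpleGraph.Walk.edges_cons, List.mem_cons] at he
    rcases he with he | he
    · rw [SimpleGraph.Walk.edges_cons, SimpleGraph.Walk.edges_cons] at hch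
      exact (List.isChain_cons_cons.mp hch).1 he
    · have hy : x ∈ r'.support := SimpleGraph.Walk.snd_mem_support_of_mem_edges r' he
      have hp := (SimpleGraph.Walk.cons_isPath_iff _ _).mp (SimpleGraph.Walk.IsPath.mk' hnd)
      exact hp.2 hy

private lemma myDecomp {V : Type*} {G : SimpleGraph V} {a b : V} (p : G.Walk a b)
    (hnd : ¬ p.support.Nodup) :
    ∃ (z : V) (p₁ : G.Walk a z) (d : G.Walk z z) (p₂ : G.Walk z b),
      p = p₁.append (d.append p₂) ∧ 0 < d.length := by
  classical
  induction p with
  | nil => exact absurd (by simp) hnd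
  | @cons u c b h q ih =>
    by_cases ha : u ∈ q.support
    · refine ⟨u, SimpleGraph.Walk.nil, SimpleGraph.Walk.cons h (q.takeUntil u ha),
        q.dropUntil u ha, ?_, by simp⟩
      rw [SimpleGraph.Walk.nil_append, SimpleGraph.Walk.cons_append]
      exact congrArg (SimpleGraph.Walk.cons h) (SimpleGraph.Walk.take_spec q ha).symm
    · have hq : ¬ q.support.Nodup := by
        intro hq
        exact hnd (by rw [SimpleGraph.Walk.support_cons]; exact List.Nodup.cons ha hq)
      obtain ⟨z, q₁, d, q₂, heq, hd⟩ := ih hq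
      exact ⟨z, SimpleGraph.Walk.cons h q₁, d, q₂, by rw [heq, SimpleGraph.Walk.cons_append], hd⟩

private lemma myGirth_le_len {V : Type*} {G : SimpleGraph V} {x : V} {c : G.Walk x x}
    (hc : c.IsCycle) : G.girth ≤ c.length := by
  have h1 : G.egirth ≤ (c.length : ℕ∞) := le_egirth.mp le_rfl x c hc
  have h2 := ENat.toNat_le_toNat h1 (by simp)
  simpa [SimpleGraph.girth] using h2

private lemma myGirth_le_reduced {V : Type*} {G : SimpleGraph V} :
    ∀ (n : ℕ) {x : V} (c : G.Walk x x), c.length ≤ n → 0 < c.length →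
      c.edges.Chain' (· ≠ ·) → G.girth ≤ c.length := by
  intro n
  induction n with
  | zero => intro x c hle hpos _; omega
  | succ n ih =>
    intro x c hle hpos hch
    cases c with
    | nil => simp at hpos
    | cons h r =>
      by_cases hnd : r.support.Nodup
      · exact myGirth_le_len (myIsCycle_aux h r hnd hch)
      · obtain ⟨z, r₁, d, r₂, heq, hd⟩ := myDecomp r hnd
        have hinf : d.edges <:+: r.edges :=
          ⟨r₁.edges, r₂.edges, by rw [heq]; simp [SimpleGraph.Walk.edges_append]⟩
        have hcht : r.edges.Chain' (· ≠ ·) := by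
          rw [SimpleGraph.Walk.edges_cons] at hch; exact hch.tail
        have hlen : r.length = r₁.length + (d.length + r₂.length) := by
          rw [heq]; simp [SimpleGraph.Walk.length_append]
        have hle' : d.length ≤ n := by
          rw [SimpleGraph.Walk.length_cons] at hle; omega
        have hgd := ih d hle' hd (hcht.infix hinf)
        rw [SimpleGraph.Walk.length_cons]
        omega

/-- In a bipartite graph of girth `g`, every closed walk with cycle of length at most
`2g - 2` traverses some edge at two (cyclically) consecutive positions. -/
theorem stmt1 {V : Type*} (G : SimpleGraph V) (U : Set V)
    (hbip : ∀ a b : V, G.Adj a b → (a ∈ U ↔ b ∉ U))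
    (g : ℕ) (hg : G.girth = g)
    (v : V) (w : G.Walk v v) (hW : isCWWC w) (hlen : w.length ≤ 2 * g - 2) :
    ∃ i j : ℕ, ∃ (h1 : i < w.edges.length) (h2 : j < w.edges.length),
      j = (i + 1) % w.edges.length ∧ w.edges[i]'h1 = w.edges[j]'h2 := by
  by_contra hcon
  push_neg at hcon
  -- the graph is not acyclic
  have hsub : SimpleGraph.fromEdgeSet {e | e ∈ w.edges} ≤ G := by
    have h1 := SimpleGraph.fromEdgeSet_mono (fun e (he : e ∈ {e | e ∈ w.edges}) =>
      w.edges_subset_edgeSet he)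
    rwa [SimpleGraph.fromEdgeSet_edgeSet] at h1
  have hnac : ¬ G.IsAcyclic := by
    intro hac
    exact hW.2 (fun a c hc => hac (c.mapLe hsub) (hc.mapLe hsub))
  have hg3 : 3 ≤ g := hg ▸ three_le_girth hnac
  -- w is not nil
  have hne : w.edges ≠ [] := by
    intro hnil
    apply hW.2
    have hset : {e : Sym2 V | e ∈ w.edges} = ∅ := by simp [hnil]
    rw [cycleFree, hset, SimpleGraph.fromEdgeSet_empty]
    intro a c hc
    cases c with
    | nil => exact hc.ne_nil rfl
    | cons h' p => exact absurd h' (by simp)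
  have hpos : 0 < w.edges.length := List.length_pos_iff.mpr hne
  -- linear reducedness
  have hch : w.edges.Chain' (· ≠ ·) := by
    simp only [List.Chain']
    rw [List.isChain_iff_getElem]
    intro i hi
    have h1 : i < w.edges.length := by omega
    have h2 : i + 1 < w.edges.length := by omega
    have := hcon i (i + 1) h1 h2 (Nat.mod_eq_of_lt h2).symm
    simpa using this
  -- cyclic wrap reducedness
  have hwrap : ∀ a ∈ w.edges.getLast?, ∀ b ∈ w.edges.head?, a ≠ b := by
    intro a ha b hb
    rw [List.getLast?_eq_getLast hne, Option.mem_some_iff] at ha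
    rw [List.head?_eq_head hne, Option.mem_some_iff] at hb
    have hmod : 0 = (w.edges.length - 1 + 1) % w.edges.length := by
      rw [Nat.sub_add_cancel hpos, Nat.mod_self]
    have := hcon (w.edges.length - 1) 0 (by omega) hpos hmod
    rw [List.getLast_eq_getElem] at ha
    rw [List.head_eq_getElem] at hb
    subst ha hb
    exact this
  -- split w
  have hlenw : w.edges.length = w.length := w.length_edges
  cases w with
  | nil => exact hne rfl
  | @cons _ y _ h r =>
    by_cases hnd : r.support.Nodup
    · exact hW.1 (myIsCycle_aux h r hnd hch)
    · obtain ⟨z, r₁, d, r₂, heq, hd⟩ := myDecomp r hnd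
      have hEdges : (SimpleGraph.Walk.cons h r).edges
          = (s(v, y) :: r₁.edges) ++ (d.edges ++ r₂.edges) := by
        rw [SimpleGraph.Walk.edges_cons, heq]
        simp [SimpleGraph.Walk.edges_append]
      -- girth ≤ d.length
      have hchd : d.edges.Chain' (· ≠ ·) := by
        refine hch.infix ⟨s(v, y) :: r₁.edges, r₂.edges, ?_⟩
        rw [hEdges]; simp
      have hgd : G.girth ≤ d.length := myGirth_le_reduced d.length d le_rfl hd hchd
      -- the complementary closed walk
      set B : G.Walk z z := r₂.append (SimpleGraph.Walk.cons h r₁) with hB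
      have hBedges : B.edges = r₂.edges ++ (s(v, y) :: r₁.edges) := by
        rw [hB, SimpleGraph.Walk.edges_append, SimpleGraph.Walk.edges_cons]
      have hchB : B.edges.Chain' (· ≠ ·) := by
        simp only [List.Chain']
        rw [hBedges, List.isChain_append]
        refine ⟨hch.infix ⟨s(v, y) :: r₁.edges ++ d.edges, [], by rw [hEdges]; simp⟩,
          hch.prefix ⟨d.edges ++ r₂.edges, by rw [hEdges]⟩, ?_⟩
        intro a ha b hb
        have hr2 : r₂.edges ≠ [] := by
          intro hnil; rw [hnil] at ha; simp at ha
        have hlast : a ∈ (SimpleGraph.Walk.cons h r).edges.getLast? := by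
          rw [hEdges, List.getLast?_append, List.getLast?_append,
            List.getLast?_eq_getLast hr2]
          rw [List.getLast?_eq_getLast hr2, Option.mem_some_iff] at ha
          simp [ha]
        have hhead : b ∈ (SimpleGraph.Walk.cons h r).edges.head? := by
          rw [hEdges]
          simp only [List.head?_cons, Option.mem_some_iff, List.cons_append] at hb ⊢
          exact hb
        exact hwrap a hlast b hhead
      have hBpos : 0 < B.length := by
        rw [hB, SimpleGraph.Walk.length_append, SimpleGraph.Walk.length_cons]; omega
      have hgB : G.girth ≤ B.length := myGirth_le_reduced B.length B le_rfl hBpos hchB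
      -- length bookkeeping
      have hlr : r.length = r₁.length + (d.length + r₂.length) := by
        rw [heq]; simp [SimpleGraph.Walk.length_append]
      have hlB : B.length = r₂.length + (r₁.length + 1) := by
        rw [hB, SimpleGraph.Walk.length_append, SimpleGraph.Walk.length_cons]
      rw [SimpleGraph.Walk.length_cons] at hlen
      rw [hg] at hgd hgB
      omega
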